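/- Fix M > 16. For k = 1,...,8 let t(k) = 1/2 - k/M, x_k = (1/2 + k/M)/(1 - 2k/M), u(k) = 1 - x_8 + x_k, v(k) = 1 + x_1^2 - x_k^2, and define μ_M = min over all pairs j ≠ k in {1,...,8} of (1 - t(k))(u(k) - u(j)) + t(k)(v(k) - v(j)). Then μ_M > 0. -/
import Mathlib


noncomputable def xk (M : ℝ) (k : ℕ) : ℝ := (1/2 + k/M) / (1 - 2*k/M)
noncomputable def tt (M : ℝ) (k : ℕ) : ℝ := 1/2 - k/M
noncomputable def uu (M : ℝ) (k : ℕ) : ℝ := (1 - xk M 8) + xk M k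
noncomputable def vv (M : ℝ) (k : ℕ) : ℝ := (1 + (xk M 1)^2) - (xk M k)^2

theorem muM_pos (M : ℝ) (hM : M > 16) :
    ∀ j k : ℕ, 1 ≤ j → j ≤ 8 → 1 ≤ k → k ≤ 8 → j ≠ k →
      0 < (1 - tt M k) * (uu M k - uu M j) + tt M k * (vv M k - vv M j) := by
  intro j k hj1 hj8 hk1 hk8 hjk
  have hM0 : (0:ℝ) < M := by linarith
  have hd : ∀ n : ℕ, n ≤ 8 → (0:ℝ) < 1 - 2*n/M := by
    intro n hn
    have hn' : (n:ℝ) ≤ 8 := by exact_mod_cast hn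
    rw [sub_pos, div_lt_one hM0]
    linarith
  have hdk := hd k hk8
  have hdj := hd j hj8
  have hxk : xk M k * (1 - 2*k/M) = 1/2 + k/M := by
    unfold xk; exact div_mul_cancel₀ _ (ne_of_gt hdk)
  have hxj : xk M j * (1 - 2*j/M) = 1/2 + j/M := by
    unfold xk; exact div_mul_cancel₀ _ (ne_of_gt hdj)
  have ht : 0 < tt M k := by
    unfold tt
    have hk' : (k:ℝ) ≤ 8 := by exact_mod_cast hk8
    have : (k:ℝ)/M < 1/2 := by
      rw [div_lt_iff₀ hM0]; linarith
    linarith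
  -- key relation: 1 - tt M k = 2 * tt M k * xk M k
  have hkey : 1 - tt M k = 2 * tt M k * xk M k := by
    unfold tt
    linear_combination -hxk
  -- x_k ≠ x_j
  have hne : xk M k - xk M j ≠ 0 := by
    have hdiff : (xk M k - xk M j) * ((1 - 2*k/M) * (1 - 2*j/M)) = 2*((k:ℝ) - j)/M := by
      have e1 : (xk M k - xk M j) * ((1 - 2*k/M) * (1 - 2*j/M))
          = (xk M k * (1 - 2*k/M)) * (1 - 2*j/M) - (xk M j * (1 - 2*j/M)) * (1 - 2*k/M) := by
        ring
      rw [e1, hxk, hxj]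
      field_simp
      ring
    intro h
    rw [h, zero_mul] at hdiff
    have hk0 : (k:ℝ) ≠ (j:ℝ) := by
      exact_mod_cast (Ne.symm hjk)
    have : 2*((k:ℝ) - j)/M ≠ 0 := by
      apply div_ne_zero _ (ne_of_gt hM0)
      intro h2
      apply hk0
      linarith
    exact this hdiff.symm
  -- expression equals tt M k * (xk M k - xk M j)^2
  have hexpr : (1 - tt M k) * (uu M k - uu M j) + tt M k * (vv M k - vv M j)
      = tt M k * (xk M k - xk M j)^2 := by
    unfold uu vv
    rw [hkey]
    ring
  rw [hexpr]
  positivity
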